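/- If B₀ is a matrix such that every Dⁱ = B₀ Cⁱ B₀ᵀ is diagonal with positive diagonal entries, then the true relative Hessian H(B₀) given by H_{abcd} = δ_{ac}(1/n)Σᵢ[Dⁱ_{bd}/Dⁱ_{aa} − 2Dⁱ_{ab}Dⁱ_{ad}/(Dⁱ_{aa})²] + δ_{ad}δ_{bc} coincides with the approximation H̃_{abcd} = δ_{ac}δ_{bd}Γ_{ab} + δ_{ad}δ_{bc} − 2δ_{abcd}, where Γ_{ab} = (1/n)Σᵢ Dⁱ_{bb}/Dⁱ_{aa}. -/

import Mathlib

open Matrix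

lemma conjPosDef {m : ℕ} {B M : Matrix (Fin m) (Fin m) ℝ} (hM : M.PosDef)
    (hB : IsUnit B.det) : (B * M * Bᵀ).PosDef := by
  refine PosDef.of_dotProduct_mulVec_pos ?_ (fun x hx => ?_)
  · have := isHermitian_mul_mul_conjTranspose B hM.isHermitian
    simpa [show Bᴴ = Bᵀ from by ext i j; simp [conjTranspose_apply]] using this
  · have hinj : Function.Injective (Bᵀ.mulVec) :=
      mulVec_injective_iff_isUnit.2 ((isUnit_iff_isUnit_det Bᵀ).2 (by simpa using hB))
    have hy : Bᵀ *ᵥ x ≠ 0 := fun h => hx (hinj (by simp [h]))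
    have h2 := hM.dotProduct_mulVec_pos hy
    convert h2 using 1
    rw [← mulVec_mulVec, ← mulVec_mulVec, dotProduct_mulVec, ← mulVec_transpose]
    simp [star, dotProduct_mulVec, mulVec_transpose]

lemma posDef_diag_pos {m : ℕ} {M : Matrix (Fin m) (Fin m) ℝ} (hM : M.PosDef)
    (a : Fin m) : 0 < M a a := by
  have := hM.dotProduct_mulVec_pos (x := Pi.single a 1) (by simp [Function.ne_iff])
  simpa [dotProduct, mulVec, Pi.single_apply] using this

theorem stmt15 {p n : ℕ} (hn : 0 < n) (C : Fin n → Matrix (Fin p) (Fin p) ℝ)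
    (hC : ∀ i, (C i).PosDef)
    (B₀ : Matrix (Fin p) (Fin p) ℝ) (hB₀ : IsUnit B₀.det)
    (D : Fin n → Matrix (Fin p) (Fin p) ℝ) (hD : ∀ i, D i = B₀ * C i * B₀ᵀ)
    (hdiag : ∀ i, (D i).IsDiag)
    (Γ : Fin p → Fin p → ℝ)
    (hΓ : ∀ a b, Γ a b = (1 / n : ℝ) * ∑ i, D i b b / D i a a) :
    ∀ a b c d : Fin p,
      (if a = c then (1 / n : ℝ) *
          ∑ i, (D i b d / D i a a - 2 * (D i a b * D i a d) / (D i a a) ^ 2)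
        else 0) + (if a = d ∧ b = c then 1 else 0)
      = (if a = c ∧ b = d then Γ a b else 0) + (if a = d ∧ b = c then 1 else 0)
          - (if a = b ∧ b = c ∧ c = d then 2 else 0) := by
  have hpos : ∀ i a, 0 < D i a a := fun i a => by
    rw [hD]; exact posDef_diag_pos (conjPosDef (hC i) hB₀) a
  have hoff : ∀ i (a b : Fin p), a ≠ b → D i a b = 0 := fun i a b h => hdiag i h
  intro a b c d
  by_cases hac : a = c
  · subst hac
    by_cases hbd : b = d
    · subst hbd
      by_cases hab : a = b
      · subst hab
        rw [if_pos rfl, if_pos (show a = a ∧ a = a from ⟨rfl, rfl⟩),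
          if_pos (show a = a ∧ a = a from ⟨rfl, rfl⟩),
          if_pos (show a = a ∧ a = a ∧ a = a from ⟨rfl, rfl, rfl⟩)]
        have hterm : ∀ i : Fin n,
            D i a a / D i a a - 2 * (D i a a * D i a a) / (D i a a) ^ 2 = -1 := by
          intro i
          have := (hpos i a).ne'
          field_simp
          ring
        rw [hΓ]
        simp only [hterm, Finset.sum_const, Finset.card_univ, Fintype.card_fin]
        have : ∀ i : Fin n, D i a a / D i a a = 1 := fun i => div_self (hpos i a).ne'
        simp only [this, Finset.sum_const, Finset.card_univ, Fintype.card_fin]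
        have hn' : (n : ℝ) ≠ 0 := Nat.cast_ne_zero.2 hn.ne'
        field_simp
        ring
      · have hoffab : ∀ i : Fin n, D i a b = 0 := fun i => hoff i a b hab
        have hterm : ∀ i : Fin n,
            D i b b / D i a a - 2 * (D i a b * D i a b) / (D i a a) ^ 2
              = D i b b / D i a a := by
          intro i; rw [hoffab]; ring
        have hne : ¬(a = b ∧ b = a ∧ a = b) := fun h => hab h.1
        rw [if_pos rfl, if_pos (show a = a ∧ b = b from ⟨rfl, rfl⟩), if_neg hne, hΓ]
        simp only [hterm]
        ring
    · have hterm : ∀ i : Fin n,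
          D i b d / D i a a - 2 * (D i a b * D i a d) / (D i a a) ^ 2 = 0 := by
        intro i
        rw [hoff i b d hbd]
        rcases eq_or_ne a b with h | h
        · rw [hoff i a d (h ▸ hbd)]; ring
        · rw [hoff i a b h]; ring
      have h1 : ¬(a = a ∧ b = d) := fun h => hbd h.2
      have h2 : ¬(a = b ∧ b = a ∧ a = d) := fun h => hbd (h.1 ▸ h.2.2)
      rw [if_pos rfl, if_neg h1, if_neg h2]
      simp only [hterm, Finset.sum_const_zero, mul_zero]
      ring
  · have h1 : ¬(a = c ∧ b = d) := fun h => hac h.1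
    have h2 : ¬(a = b ∧ b = c ∧ c = d) := fun h => hac (h.1.trans h.2.1)
    simp only [if_neg hac, if_neg h1, if_neg h2]
    ring
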